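/- For every integer m ≥ 1, W̃_{2m+5}(p) − W̃_{2m+3}(p) + t_{m+3} p^{m+3} q^{m+1} = p^m q^m [ d_{m,0} p^5 − 2 d_{m,1} p^4 q + (d_{m,0} + 3 d_{m,1} + 2 d_{m,2}) p^3 q^2 − (d_{m,0} + d_{m,1} + 3 d_{m,2} + d_{m,3}) p^2 q^3 − (3 d_{m,0} + 4 d_{m,1} + 2 d_{m,2}) p q^4 − (d_{m,0} + d_{m,1}) q^5 + t_{m+3} p^3 q ], where d_{m,j} := C(2m, m+j) − C(2m, m+j+1) and t_m := (1/m)·C(2m−2, m−1). -/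

import Mathlib

open Finset

/-- Probability weight of a single path of length `N`. -/
noncomputable def pathProb (p : ℝ) (N : ℕ) (x : Fin N → Bool) : ℝ :=
  p ^ (Finset.univ.filter (fun i => x i = true)).card *
    (1 - p) ^ (N - (Finset.univ.filter (fun i => x i = true)).card)

open Classical in
/-- Probability of an event `E` for the `N`-step Bernoulli walk. -/
noncomputable def walkProb (p : ℝ) (N : ℕ) (E : Set (Fin N → Bool)) : ℝ :=
  ∑ x : Fin N → Bool, if x ∈ E then pathProb p N x else 0

/-- Partial sum `S_j` of the walk given by the path `x`. -/
def walkS (N : ℕ) (x : Fin N → Bool) (j : ℕ) : ℤ :=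
  ∑ i ∈ Finset.univ.filter (fun i : Fin N => (i : ℕ) < j), (if x i then (1 : ℤ) else -1)

/-- Running maximum `M_N = max_{0 ≤ j ≤ N} S_j`. -/
def walkM (N : ℕ) (x : Fin N → Bool) : ℤ :=
  (Finset.range (N + 1)).sup' Finset.nonempty_range_add_one (fun j => walkS N x j)

/-- `U_n(p) = P(M_n ≤ 1)`. -/
noncomputable def U (n : ℕ) (p : ℝ) : ℝ :=
  walkProb p n {x | walkM n x ≤ 1}

/-- The polynomials `Δπ_{3,k}` for `k = 0,…,4` (and `0` for `k ≥ 5`). -/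
noncomputable def deltaPi3 (p : ℝ) : ℕ → ℝ
  | 0 => p ^ 3
  | 1 => -(p ^ 2 * (1 - p)) + 2 * p * (1 - p) ^ 2 + (1 - p) ^ 3
  | 2 => -(p ^ 3) + 2 * p ^ 2 * (1 - p) + p * (1 - p) ^ 2
  | 3 => p ^ 2 * (1 - p)
  | 4 => p ^ 3
  | _ => 0

/-- `W̃_n(p) = Σ_{k=0}^{4} P(max(1, M_{n−3}) − S_{n−3} ≤ k) · Δπ_{3,k}`. -/
noncomputable def Wt (n : ℕ) (p : ℝ) : ℝ :=
  ∑ k ∈ Finset.range 5,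
    walkProb p (n - 3) {x | max 1 (walkM (n - 3) x) - walkS (n - 3) x (n - 3) ≤ (k : ℤ)} *
      deltaPi3 p k

/-- `d_{m,j} = C(2m, m+j) − C(2m, m+j+1)`, as a real number. -/
noncomputable def dCoef (m j : ℕ) : ℝ :=
  ((2 * m).choose (m + j) : ℝ) - ((2 * m).choose (m + j + 1) : ℝ)

namespace WtProof

open scoped Classical

def ups (n : ℕ) (x : Fin n → Bool) : ℕ := (Finset.univ.filter (fun i => x i = true)).card

lemma pathProb_eq (p : ℝ) (n : ℕ) (x : Fin n → Bool) :
    pathProb p n x = p ^ ups n x * (1 - p) ^ (n - ups n x) := rfl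

lemma ups_le (n : ℕ) (x : Fin n → Bool) : ups n x ≤ n := by
  have := Finset.card_filter_le (Finset.univ : Finset (Fin n)) (fun i => x i = true)
  simpa [ups] using this

lemma walkS_zero (n : ℕ) (x : Fin n → Bool) : walkS n x 0 = 0 := by
  simp [walkS]

lemma walkS_succ (n : ℕ) (x : Fin n → Bool) {j : ℕ} (hj : j < n) :
    walkS n x (j + 1) = walkS n x j + (if x ⟨j, hj⟩ then 1 else -1) := by
  unfold walkS
  have h : (Finset.univ.filter (fun i : Fin n => (i : ℕ) < j + 1))
      = insert ⟨j, hj⟩ (Finset.univ.filter (fun i : Fin n => (i : ℕ) < j)) := by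
    ext i
    simp only [Finset.mem_filter, Finset.mem_univ, true_and, Finset.mem_insert, Fin.ext_iff]
    omega
  rw [h, Finset.sum_insert (by simp)]
  ring

lemma walkS_stable (n : ℕ) (x : Fin n → Bool) {j : ℕ} (hj : n ≤ j) :
    walkS n x j = walkS n x n := by
  unfold walkS
  congr 1
  ext i
  simp only [Finset.mem_filter, Finset.mem_univ, true_and]
  have := i.isLt
  omega

lemma walkS_congr {n : ℕ} {x y : Fin n → Bool} {j : ℕ}
    (h : ∀ i : Fin n, (i : ℕ) < j → x i = y i) : walkS n x j = walkS n y j := by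
  unfold walkS
  refine Finset.sum_congr rfl fun i hi => ?_
  rw [h i (Finset.mem_filter.1 hi).2]

lemma walkS_last (n : ℕ) (x : Fin n → Bool) :
    walkS n x n = 2 * (ups n x : ℤ) - n := by
  unfold walkS
  have h : (Finset.univ.filter (fun i : Fin n => (i : ℕ) < n)) = Finset.univ := by
    ext i; simp [i.isLt]
  rw [h]
  have h2 : ∀ i : Fin n, (if x i then (1:ℤ) else -1)
      = 2 * (if x i = true then (1:ℤ) else 0) - 1 := by
    intro i; cases hxi : x i <;> simp [hxi]
  rw [Finset.sum_congr rfl fun i _ => h2 i, Finset.sum_sub_distrib, ← Finset.mul_sum,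
    Finset.sum_boole, Finset.sum_const]
  simp [ups, Finset.card_univ]

lemma walkS_lower (n : ℕ) (x : Fin n → Bool) (j : ℕ) :
    (ups n x : ℤ) - n ≤ walkS n x j := by
  unfold walkS
  have h1 : ∑ i ∈ Finset.univ.filter (fun i : Fin n => (i : ℕ) < j),
      (if x i = false then (-1:ℤ) else 0) ≤
      ∑ i ∈ Finset.univ.filter (fun i : Fin n => (i : ℕ) < j), (if x i then (1:ℤ) else -1) := by
    refine Finset.sum_le_sum fun i _ => ?_
    cases hxi : x i <;> simp [hxi]
  have h2 : ∑ i ∈ Finset.univ.filter (fun i : Fin n => (i : ℕ) < j),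
      (if x i = false then (-1:ℤ) else 0)
      = -((Finset.univ.filter (fun i : Fin n => (i : ℕ) < j)).filter
          (fun i => x i = false)).card := by
    rw [← Finset.sum_boole (fun i => x i = false)]
    push_cast
    rw [← Finset.sum_neg_distrib]
    refine Finset.sum_congr rfl fun i _ => ?_
    split <;> simp
  have h3 : (((Finset.univ.filter (fun i : Fin n => (i : ℕ) < j)).filter
        (fun i => x i = false)).card : ℤ) ≤ ((Finset.univ.filter
        (fun i : Fin n => x i = false)).card : ℤ) := by
    exact_mod_cast Finset.card_le_card (by
      intro i hi
      simp only [Finset.mem_filter, Finset.mem_univ, true_and] at hi ⊢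
      exact hi.2)
  have h4 : (Finset.univ.filter (fun i : Fin n => x i = false)).card = n - ups n x := by
    have := Finset.card_filter_add_card_filter_not
      (s := (Finset.univ : Finset (Fin n))) (p := fun i => x i = true)
    simp only [Finset.card_univ, Fintype.card_fin] at this
    have hb : (Finset.univ.filter (fun i : Fin n => ¬ x i = true))
        = (Finset.univ.filter (fun i : Fin n => x i = false)) := by
      ext i; simp
    rw [hb] at this
    unfold ups
    omega
  have hle := ups_le n x
  omega

lemma walkM_le_iff (n : ℕ) (x : Fin n → Bool) (z : ℤ) :
    walkM n x ≤ z ↔ ∀ j, j ≤ n → walkS n x j ≤ z := by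
  rw [walkM, Finset.sup'_le_iff]
  constructor
  · intro h j hj; exact h j (Finset.mem_range.2 (by omega))
  · intro h j hj; exact h j (by have := Finset.mem_range.1 hj; omega)

lemma exists_hit {n : ℕ} {x : Fin n → Bool} {t : ℤ} (ht : t ≤ 0) :
    ∀ j, walkS n x j ≤ t → ∃ i, i ≤ j ∧ walkS n x i = t := by
  intro j
  induction j with
  | zero =>
    intro h
    refine ⟨0, le_refl _, ?_⟩
    rw [walkS_zero] at h ⊢
    omega
  | succ j ih =>
    intro h
    by_cases hn : j < n
    · rcases le_or_gt (walkS n x j) t with h' | h'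
      · obtain ⟨i, hi, he⟩ := ih h'
        exact ⟨i, by omega, he⟩
      · refine ⟨j + 1, le_refl _, ?_⟩
        rw [walkS_succ n x hn] at h ⊢
        by_cases hb : x ⟨j, hn⟩ <;> simp only [hb, if_true, if_false] at h ⊢ <;> omega
    · rw [walkS_stable n x (by omega : n ≤ j + 1), ← walkS_stable n x (by omega : n ≤ j)] at h
      obtain ⟨i, hi, he⟩ := ih h
      exact ⟨i, by omega, he⟩

lemma card_ups_eq (n u : ℕ) :
    (Finset.univ.filter (fun x : Fin n → Bool => ups n x = u)).card = n.choose u := by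
  have hcard : ((Finset.univ : Finset (Fin n)).powersetCard u).card = n.choose u := by
    rw [Finset.card_powersetCard, Finset.card_univ, Fintype.card_fin]
  rw [← hcard]
  refine Finset.card_bij' (fun x _ => Finset.univ.filter (fun i => x i = true))
    (fun s _ => fun i => decide (i ∈ s)) ?_ ?_ ?_ ?_
  · intro x hx
    simp only [Finset.mem_filter, Finset.mem_univ, true_and] at hx
    rw [Finset.mem_powersetCard]
    exact ⟨Finset.filter_subset _ _ |>.trans (by simp), hx⟩
  · intro s hs
    rw [Finset.mem_powersetCard] at hs
    refine Finset.mem_filter.2 ⟨Finset.mem_univ _, ?_⟩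
    unfold ups
    rw [← hs.2]
    congr 1
    ext i
    simp
  · intro x hx
    funext i
    simp
  · intro s hs
    ext i
    simp

def wrev (n : ℕ) (x : Fin n → Bool) : Fin n → Bool := fun i => x i.rev

lemma wrev_wrev (n : ℕ) (x : Fin n → Bool) : wrev n (wrev n x) = x := by
  funext i; simp [wrev, Fin.rev_rev]

lemma ups_wrev (n : ℕ) (x : Fin n → Bool) : ups n (wrev n x) = ups n x := by
  unfold ups wrev
  refine Finset.card_bij' (fun i _ => i.rev) (fun i _ => i.rev) ?_ ?_ ?_ ?_
  · intro i hi
    simp only [Finset.mem_filter, Finset.mem_univ, true_and] at hi ⊢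
    exact hi
  · intro i hi
    simp only [Finset.mem_filter, Finset.mem_univ, true_and] at hi ⊢
    rw [Fin.rev_rev]
    exact hi
  · intro i _; exact Fin.rev_rev i
  · intro i _; exact Fin.rev_rev i

lemma walkS_wrev (n : ℕ) (x : Fin n → Bool) {j : ℕ} (hj : j ≤ n) :
    walkS n (wrev n x) j = walkS n x n - walkS n x (n - j) := by
  have h1 : walkS n (wrev n x) j
      = ∑ i ∈ Finset.univ.filter (fun i : Fin n => ¬ ((i : ℕ) < n - j)),
          (if x i then (1:ℤ) else -1) := by
    unfold walkS wrev
    refine Finset.sum_bij' (fun i _ => Fin.rev i) (fun i _ => Fin.rev i) ?_ ?_ ?_ ?_ ?_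
    · intro i hi
      simp only [Finset.mem_filter, Finset.mem_univ, true_and] at hi ⊢
      rw [Fin.val_rev]
      have := i.isLt
      omega
    · intro i hi
      simp only [Finset.mem_filter, Finset.mem_univ, true_and] at hi ⊢
      rw [Fin.val_rev]
      have := i.isLt
      omega
    · intro i _; exact Fin.rev_rev i
    · intro i _; exact Fin.rev_rev i
    · intro i _; rfl
  have h2 : walkS n x n + 0 = walkS n x (n - j)
      + ∑ i ∈ Finset.univ.filter (fun i : Fin n => ¬ ((i : ℕ) < n - j)),
          (if x i then (1:ℤ) else -1) := by
    rw [add_zero]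
    unfold walkS
    rw [Finset.sum_filter_add_sum_filter_not Finset.univ (fun i : Fin n => (i : ℕ) < n - j)]
    congr 1
    ext i
    simp [i.isLt]
  rw [h1]
  omega
def lvl (k : ℕ) : ℤ := -((k : ℤ) + 1)

noncomputable def phi (n k : ℕ) (x : Fin n → Bool) : Fin n → Bool :=
  if h : ∃ j, walkS n x j = lvl k then
    (fun i => if (i : ℕ) < Nat.find h then x i else !(x i))
  else x

lemma phi_lt (n k : ℕ) (x : Fin n → Bool) (h : ∃ j, walkS n x j = lvl k)
    (i : Fin n) (hi : (i : ℕ) < Nat.find h) : phi n k x i = x i := by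
  rw [phi, dif_pos h]
  exact if_pos hi

lemma phi_ge (n k : ℕ) (x : Fin n → Bool) (h : ∃ j, walkS n x j = lvl k)
    (i : Fin n) (hi : ¬ ((i : ℕ) < Nat.find h)) : phi n k x i = !(x i) := by
  rw [phi, dif_pos h]
  exact if_neg hi

lemma walkS_phi_le (n k : ℕ) (x : Fin n → Bool) (h : ∃ j, walkS n x j = lvl k)
    {j : ℕ} (hj : j ≤ Nat.find h) : walkS n (phi n k x) j = walkS n x j :=
  walkS_congr (fun i hi => phi_lt n k x h i (by omega))

lemma walkS_phi_ge (n k : ℕ) (x : Fin n → Bool) (h : ∃ j, walkS n x j = lvl k) :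
    ∀ j, Nat.find h ≤ j → walkS n (phi n k x) j = 2 * lvl k - walkS n x j := by
  intro j hj
  induction j, hj using Nat.le_induction with
  | base =>
    rw [walkS_phi_le n k x h (le_refl _), Nat.find_spec h]
    ring
  | succ j hj ih =>
    by_cases hn : j < n
    · rw [walkS_succ n _ hn, walkS_succ n x hn, ih,
        phi_ge n k x h ⟨j, hn⟩ (by simp only [Fin.val_mk]; omega)]
      cases hb : x ⟨j, hn⟩ <;> simp [hb] <;> ring
    · rw [walkS_stable n (phi n k x) (by omega : n ≤ j + 1),
        walkS_stable n x (by omega : n ≤ j + 1),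
        ← walkS_stable n (phi n k x) (by omega : n ≤ j),
        ← walkS_stable n x (by omega : n ≤ j)]
      exact ih

lemma hits_phi (n k : ℕ) (x : Fin n → Bool) (h : ∃ j, walkS n x j = lvl k) :
    ∃ j, walkS n (phi n k x) j = lvl k :=
  ⟨Nat.find h, by rw [walkS_phi_le n k x h (le_refl _)]; exact Nat.find_spec h⟩

lemma find_phi (n k : ℕ) (x : Fin n → Bool) (h : ∃ j, walkS n x j = lvl k) :
    Nat.find (hits_phi n k x h) = Nat.find h := by
  apply le_antisymm
  · exact Nat.find_min' _ (by rw [walkS_phi_le n k x h (le_refl _)]; exact Nat.find_spec h)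
  · by_contra hlt
    push_neg at hlt
    have h1 := Nat.find_spec (hits_phi n k x h)
    rw [walkS_phi_le n k x h (le_of_lt hlt)] at h1
    exact Nat.find_min h hlt h1

lemma phi_phi (n k : ℕ) (x : Fin n → Bool) (h : ∃ j, walkS n x j = lvl k) :
    phi n k (phi n k x) = x := by
  funext i
  have h2 := hits_phi n k x h
  by_cases hi : (i : ℕ) < Nat.find h
  · rw [phi_lt n k (phi n k x) h2 i (by rw [find_phi]; exact hi), phi_lt n k x h i hi]
  · rw [phi_ge n k (phi n k x) h2 i (by rw [find_phi]; exact hi), phi_ge n k x h i hi,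
      Bool.not_not]

lemma ups_phi (n k : ℕ) (x : Fin n → Bool) (h : ∃ j, walkS n x j = lvl k)
    (hfn : Nat.find h ≤ n) : (ups n (phi n k x) : ℤ) = n - ups n x - (k + 1) := by
  have h1 := walkS_last n (phi n k x)
  have h2 := walkS_last n x
  have h3 := walkS_phi_ge n k x h n hfn
  rw [h1, h2] at h3
  unfold lvl at h3
  omega

lemma bad_hits {n k : ℕ} {x : Fin n → Bool} (hb : ∃ j, j ≤ n ∧ walkS n x j ≤ lvl k) :
    ∃ j, j ≤ n ∧ walkS n x j = lvl k := by
  obtain ⟨j, hj, hle⟩ := hb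
  obtain ⟨i, hi, he⟩ := exists_hit (t := lvl k) (by unfold lvl; omega) j hle
  exact ⟨i, by omega, he⟩

lemma card_bad (n k u : ℕ) (hcond : n + 1 ≤ 2 * u + k) (hun : u + k + 1 ≤ n) :
    (Finset.univ.filter (fun x : Fin n → Bool =>
      (∃ j, j ≤ n ∧ walkS n x j ≤ lvl k) ∧ ups n x = u)).card = n.choose (u + k + 1) := by
  have hw : n.choose (n - (u + k + 1)) = n.choose (u + k + 1) := Nat.choose_symm hun
  rw [← hw, ← card_ups_eq n (n - (u + k + 1))]
  have memtgt : ∀ y : Fin n → Bool, ups n y = n - (u + k + 1) →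
      (∃ j, j ≤ n ∧ walkS n y j ≤ lvl k) := by
    intro y hy
    refine ⟨n, le_refl _, ?_⟩
    have h2 := walkS_last n y
    rw [hy] at h2
    unfold lvl
    have : ((n - (u + k + 1) : ℕ) : ℤ) = (n : ℤ) - u - k - 1 := by
      push_cast [hun]
      omega
    omega
  refine Finset.card_bij' (fun x _ => phi n k x) (fun y _ => phi n k y) ?_ ?_ ?_ ?_
  · intro x hx
    simp only [Finset.mem_filter, Finset.mem_univ, true_and] at hx
    obtain ⟨hbad, hux⟩ := hx
    obtain ⟨i, hi, he⟩ := bad_hits hbad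
    have h : ∃ j, walkS n x j = lvl k := ⟨i, he⟩
    have hfn : Nat.find h ≤ n := le_trans (Nat.find_min' h he) hi
    have := ups_phi n k x h hfn
    simp only [Finset.mem_filter, Finset.mem_univ, true_and]
    rw [hux] at this
    omega
  · intro y hy
    simp only [Finset.mem_filter, Finset.mem_univ, true_and] at hy ⊢
    have hbad := memtgt y hy
    obtain ⟨i, hi, he⟩ := bad_hits hbad
    have h : ∃ j, walkS n y j = lvl k := ⟨i, he⟩
    have hfn : Nat.find h ≤ n := le_trans (Nat.find_min' h he) hi
    constructor
    · exact ⟨Nat.find h, hfn, by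
        rw [walkS_phi_le n k y h (le_refl _)]
        rw [Nat.find_spec h]⟩
    · have := ups_phi n k y h hfn
      rw [hy] at this
      have hcast : ((n - (u + k + 1) : ℕ) : ℤ) = (n : ℤ) - u - k - 1 := by
        push_cast [hun]; omega
      omega
  · intro x hx
    simp only [Finset.mem_filter, Finset.mem_univ, true_and] at hx
    obtain ⟨i, hi, he⟩ := bad_hits hx.1
    exact phi_phi n k x ⟨i, he⟩
  · intro y hy
    simp only [Finset.mem_filter, Finset.mem_univ, true_and] at hy
    obtain ⟨i, hi, he⟩ := bad_hits (memtgt y hy)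
    exact phi_phi n k y ⟨i, he⟩

lemma card_good (n k u : ℕ) (hcond : n + 1 ≤ 2 * u + k) :
    ((Finset.univ.filter (fun x : Fin n → Bool =>
      (∀ j, j ≤ n → -(k : ℤ) ≤ walkS n x j) ∧ ups n x = u)).card : ℝ)
      = (n.choose u : ℝ) - (n.choose (u + k + 1) : ℝ) := by
  by_cases hun : u + k + 1 ≤ n
  · have hsplit := Finset.card_filter_add_card_filter_not
      (s := Finset.univ.filter (fun x : Fin n → Bool => ups n x = u))
      (p := fun x => ∀ j, j ≤ n → -(k : ℤ) ≤ walkS n x j)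
    rw [Finset.filter_filter, Finset.filter_filter] at hsplit
    have e1 : (Finset.univ.filter (fun x : Fin n → Bool =>
        ups n x = u ∧ ∀ j, j ≤ n → -(k : ℤ) ≤ walkS n x j))
        = (Finset.univ.filter (fun x : Fin n → Bool =>
        (∀ j, j ≤ n → -(k : ℤ) ≤ walkS n x j) ∧ ups n x = u)) := by
      ext x
      simp only [Finset.mem_filter, Finset.mem_univ, true_and]
      tauto
    have e2 : (Finset.univ.filter (fun x : Fin n → Bool =>
        ups n x = u ∧ ¬ ∀ j, j ≤ n → -(k : ℤ) ≤ walkS n x j))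
        = (Finset.univ.filter (fun x : Fin n → Bool =>
        (∃ j, j ≤ n ∧ walkS n x j ≤ lvl k) ∧ ups n x = u)) := by
      ext x
      simp only [Finset.mem_filter, Finset.mem_univ, true_and]
      constructor
      · rintro ⟨h1, h2⟩
        push_neg at h2
        obtain ⟨j, hj, hlt⟩ := h2
        exact ⟨⟨j, hj, by unfold lvl; omega⟩, h1⟩
      · rintro ⟨⟨j, hj, hle⟩, h1⟩
        refine ⟨h1, ?_⟩
        push_neg
        refine ⟨j, hj, ?_⟩
        unfold lvl at hle
        omega
    rw [e1, e2, card_bad n k u hcond hun, card_ups_eq n u] at hsplit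
    have h2 : ((Finset.univ.filter (fun x : Fin n → Bool =>
        (∀ j, j ≤ n → -(k : ℤ) ≤ walkS n x j) ∧ ups n x = u)).card : ℝ)
        + (n.choose (u + k + 1) : ℝ) = (n.choose u : ℝ) := by
      exact_mod_cast hsplit
    linarith
  · have hzero : n.choose (u + k + 1) = 0 := Nat.choose_eq_zero_of_lt (by omega)
    have e : (Finset.univ.filter (fun x : Fin n → Bool =>
        (∀ j, j ≤ n → -(k : ℤ) ≤ walkS n x j) ∧ ups n x = u))
        = (Finset.univ.filter (fun x : Fin n → Bool => ups n x = u)) := by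
      ext x
      simp only [Finset.mem_filter, Finset.mem_univ, true_and]
      constructor
      · exact fun h => h.2
      · intro h
        refine ⟨fun j hj => ?_, h⟩
        have := walkS_lower n x j
        rw [h] at this
        omega
    rw [e, card_ups_eq n u, hzero]
    simp

lemma card_event (n k u : ℕ) :
    ((Finset.univ.filter (fun x : Fin n → Bool =>
        (max 1 (walkM n x) - walkS n x n ≤ (k : ℤ)) ∧ ups n x = u)).card : ℝ)
      = if n + 1 ≤ 2 * u + k then (n.choose u : ℝ) - (n.choose (u + k + 1) : ℝ) else 0 := by
  by_cases hcond : n + 1 ≤ 2 * u + k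
  · rw [if_pos hcond]
    have e1 : (Finset.univ.filter (fun x : Fin n → Bool =>
        (max 1 (walkM n x) - walkS n x n ≤ (k : ℤ)) ∧ ups n x = u))
        = (Finset.univ.filter (fun x : Fin n → Bool =>
        (∀ j, j ≤ n → walkS n x j ≤ walkS n x n + k) ∧ ups n x = u)) := by
      ext x
      simp only [Finset.mem_filter, Finset.mem_univ, true_and]
      constructor
      · rintro ⟨h1, h2⟩
        rw [sub_le_iff_le_add, max_le_iff, walkM_le_iff] at h1
        refine ⟨fun j hj => ?_, h2⟩
        have := h1.2 j hj
        omega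
      · rintro ⟨h1, h2⟩
        refine ⟨?_, h2⟩
        rw [sub_le_iff_le_add, max_le_iff, walkM_le_iff]
        have hlast := walkS_last n x
        rw [h2] at hlast
        constructor
        · omega
        · intro j hj
          have := h1 j hj
          omega
    have e2 : (Finset.univ.filter (fun x : Fin n → Bool =>
        (∀ j, j ≤ n → walkS n x j ≤ walkS n x n + k) ∧ ups n x = u)).card
        = (Finset.univ.filter (fun x : Fin n → Bool =>
        (∀ j, j ≤ n → -(k : ℤ) ≤ walkS n x j) ∧ ups n x = u)).card := by
      refine Finset.card_bij' (fun x _ => wrev n x) (fun y _ => wrev n y) ?_ ?_ ?_ ?_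
      · intro x hx
        simp only [Finset.mem_filter, Finset.mem_univ, true_and] at hx ⊢
        refine ⟨fun j hj => ?_, by rw [ups_wrev]; exact hx.2⟩
        rw [walkS_wrev n x hj]
        have := hx.1 (n - j) (by omega)
        omega
      · intro y hy
        simp only [Finset.mem_filter, Finset.mem_univ, true_and] at hy ⊢
        refine ⟨fun j hj => ?_, by rw [ups_wrev]; exact hy.2⟩
        rw [walkS_wrev n y hj, walkS_wrev n y (le_refl n), Nat.sub_self, walkS_zero]
        have := hy.1 (n - j) (by omega)
        omega
      · intro x _; exact wrev_wrev n x
      · intro y _; exact wrev_wrev n y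
    rw [e1, e2]
    exact card_good n k u hcond
  · rw [if_neg hcond]
    have e : (Finset.univ.filter (fun x : Fin n → Bool =>
        (max 1 (walkM n x) - walkS n x n ≤ (k : ℤ)) ∧ ups n x = u)) = ∅ := by
      ext x
      simp only [Finset.mem_filter, Finset.mem_univ, true_and, Finset.notMem_empty,
        iff_false, not_and]
      intro h1 h2
      rw [sub_le_iff_le_add, max_le_iff] at h1
      have hlast := walkS_last n x
      rw [h2] at hlast
      omega
    rw [e]
    simp

def Acoef (n k u : ℕ) : ℝ :=
  if n + 1 ≤ 2 * u + k then ((n.choose u : ℝ) - (n.choose (u + k + 1) : ℝ)) else 0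

lemma walkProb_event (p : ℝ) (n k : ℕ) :
    walkProb p n {x | max 1 (walkM n x) - walkS n x n ≤ (k : ℤ)}
      = ∑ u ∈ Finset.range (n + 1), Acoef n k u * p ^ u * (1 - p) ^ (n - u) := by
  classical
  have e0 : walkProb p n {x | max 1 (walkM n x) - walkS n x n ≤ (k : ℤ)}
      = ∑ x : Fin n → Bool,
        (if (max 1 (walkM n x) - walkS n x n ≤ (k : ℤ)) then pathProb p n x else 0) := by
    rw [walkProb]
    refine Finset.sum_congr rfl fun x _ => ?_
    by_cases hP : max 1 (walkM n x) - walkS n x n ≤ (k : ℤ)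
    · rw [if_pos (show x ∈ {x | max 1 (walkM n x) - walkS n x n ≤ (k : ℤ)} from hP), if_pos hP]
    · rw [if_neg (show ¬ x ∈ {x | max 1 (walkM n x) - walkS n x n ≤ (k : ℤ)} from hP),
        if_neg hP]
  rw [e0,
    ← Finset.sum_fiberwise_of_maps_to (g := ups n) (t := Finset.range (n + 1))
      (fun x _ => Finset.mem_range.2 (by have := ups_le n x; omega)) _]
  refine Finset.sum_congr rfl fun u _ => ?_
  have e1 : ∑ x ∈ Finset.univ.filter (fun x : Fin n → Bool => ups n x = u),
      (if (max 1 (walkM n x) - walkS n x n ≤ (k : ℤ)) then pathProb p n x else 0)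
      = ∑ x ∈ Finset.univ.filter (fun x : Fin n → Bool => ups n x = u),
      (if (max 1 (walkM n x) - walkS n x n ≤ (k : ℤ)) then p ^ u * (1 - p) ^ (n - u) else 0) := by
    refine Finset.sum_congr rfl fun x hx => ?_
    simp only [Finset.mem_filter] at hx
    rw [pathProb_eq, hx.2]
  rw [e1, ← Finset.sum_filter, Finset.sum_const, nsmul_eq_mul, Finset.filter_filter]
  have e2 : (Finset.univ.filter (fun x : Fin n → Bool =>
      ups n x = u ∧ max 1 (walkM n x) - walkS n x n ≤ (k : ℤ)))
      = (Finset.univ.filter (fun x : Fin n → Bool =>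
      (max 1 (walkM n x) - walkS n x n ≤ (k : ℤ)) ∧ ups n x = u)) := by
    ext x
    simp only [Finset.mem_filter, Finset.mem_univ, true_and]
    tauto
  rw [e2]
  rw [show ((Finset.univ.filter (fun x : Fin n → Bool =>
      (max 1 (walkM n x) - walkS n x n ≤ (k : ℤ)) ∧ ups n x = u)).card : ℝ)
      = Acoef n k u from card_event n k u]
  ring

lemma Wt_eq (p : ℝ) (n : ℕ) :
    Wt (n + 3) p = ∑ k ∈ Finset.range 5,
      (∑ u ∈ Finset.range (n + 1), Acoef n k u * p ^ u * (1 - p) ^ (n - u)) * deltaPi3 p k := by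
  unfold Wt
  rw [Nat.add_sub_cancel]
  exact Finset.sum_congr rfl fun k _ => by rw [walkProb_event]


lemma Acoef_zero {n k u : ℕ} (h : n + 1 ≤ u) : Acoef n k u = 0 := by
  unfold Acoef
  split
  · rw [Nat.choose_eq_zero_of_lt (by omega), Nat.choose_eq_zero_of_lt (by omega)]
    simp
  · rfl

lemma chooseP (N r : ℕ) : (N + 1).choose (r + 1) = N.choose r + N.choose (r + 1) :=
  Nat.choose_succ_succ N r

lemma pascalR (a r : ℕ) :
    ((2 * a + 4).choose (r + 2) : ℝ)
      = (2 * a + 2).choose r + 2 * (2 * a + 2).choose (r + 1) + (2 * a + 2).choose (r + 2) := by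
  have h : (2 * a + 4).choose (r + 2)
      = (2 * a + 2).choose r + 2 * ((2 * a + 2).choose (r + 1)) + (2 * a + 2).choose (r + 2) := by
    rw [show 2 * a + 4 = (2 * a + 3) + 1 from by omega,
      show r + 2 = (r + 1) + 1 from by omega, chooseP (2 * a + 3) (r + 1),
      show 2 * a + 3 = (2 * a + 2) + 1 from by omega, chooseP (2 * a + 2) r,
      chooseP (2 * a + 2) (r + 1)]
    ring
  rw [h]
  push_cast
  ring

lemma pwgen (a k u0 : ℕ)
    (hcn : ∀ u, 2 * a + 2 + 1 ≤ 2 * u + k ↔ u0 ≤ u)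
    (hcN : ∀ v, 2 * a + 4 + 1 ≤ 2 * v + k ↔ u0 + 1 ≤ v) :
    ∀ v, Acoef (2 * a + 4) k v
      = (if 2 ≤ v then Acoef (2 * a + 2) k (v - 2) else 0)
        + 2 * (if 1 ≤ v then Acoef (2 * a + 2) k (v - 1) else 0)
        + Acoef (2 * a + 2) k v
        + (if v = u0 then -(((2 * a + 2).choose u0 : ℝ) - (2 * a + 2).choose (u0 + k + 1)) else 0)
        + (if v = u0 + 1 then
            (((2 * a + 4).choose (u0 + 1) : ℝ) - (2 * a + 4).choose (u0 + 1 + k + 1))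
            - 2 * (((2 * a + 2).choose u0 : ℝ) - (2 * a + 2).choose (u0 + k + 1))
            - (((2 * a + 2).choose (u0 + 1) : ℝ) - (2 * a + 2).choose (u0 + 1 + k + 1))
          else 0) := by
  have zn : ∀ u, u < u0 → Acoef (2 * a + 2) k u = 0 := fun u hu => by
    unfold Acoef
    exact if_neg (fun hc => by have := (hcn u).1 hc; omega)
  have zN : ∀ v, v < u0 + 1 → Acoef (2 * a + 4) k v = 0 := fun v hv => by
    unfold Acoef
    exact if_neg (fun hc => by have := (hcN v).1 hc; omega)
  intro v
  have hsplit : (v + 1 ≤ u0 ∨ u0 = v ∨ u0 + 1 = v) ∨ ∃ w, v = w + 2 ∧ u0 ≤ w := by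
    rcases Nat.lt_or_ge v (u0 + 2) with hsm | hbig
    · left; omega
    · right; exact ⟨v - 2, by omega, by omega⟩
  rcases hsplit with (hv | rfl | rfl) | ⟨w, rfl, hw⟩
  · have g1 : (if 2 ≤ v then Acoef (2 * a + 2) k (v - 2) else 0) = 0 := by
      split
      · exact zn _ (by omega)
      · rfl
    have g2 : (if 1 ≤ v then Acoef (2 * a + 2) k (v - 1) else 0) = 0 := by
      split
      · exact zn _ (by omega)
      · rfl
    rw [zN v (by omega), zn v (by omega), g1, g2,
      if_neg (by omega : ¬ v = u0), if_neg (by omega : ¬ v = u0 + 1)]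
    ring
  · have g1 : (if 2 ≤ u0 then Acoef (2 * a + 2) k (u0 - 2) else 0) = 0 := by
      split
      · exact zn _ (by omega)
      · rfl
    have g2 : (if 1 ≤ u0 then Acoef (2 * a + 2) k (u0 - 1) else 0) = 0 := by
      split
      · exact zn _ (by omega)
      · rfl
    have m1 : Acoef (2 * a + 2) k u0
        = ((2 * a + 2).choose u0 : ℝ) - (2 * a + 2).choose (u0 + k + 1) := by
      unfold Acoef
      exact if_pos ((hcn u0).2 (le_refl _))
    rw [zN u0 (by omega), g1, g2, m1, if_pos rfl, if_neg (by omega : ¬ u0 = u0 + 1)]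
    ring
  · have L : Acoef (2 * a + 4) k (u0 + 1)
        = ((2 * a + 4).choose (u0 + 1) : ℝ) - (2 * a + 4).choose (u0 + 1 + k + 1) := by
      unfold Acoef
      exact if_pos ((hcN _).2 (le_refl _))
    have g1 : (if 2 ≤ u0 + 1 then Acoef (2 * a + 2) k (u0 + 1 - 2) else 0) = 0 := by
      split
      · exact zn _ (by omega)
      · rfl
    have g2 : (if 1 ≤ u0 + 1 then Acoef (2 * a + 2) k (u0 + 1 - 1) else 0)
        = Acoef (2 * a + 2) k u0 := by
      rw [if_pos (by omega), show u0 + 1 - 1 = u0 from by omega]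
    have m1 : Acoef (2 * a + 2) k u0
        = ((2 * a + 2).choose u0 : ℝ) - (2 * a + 2).choose (u0 + k + 1) := by
      unfold Acoef
      exact if_pos ((hcn u0).2 (le_refl _))
    have m2 : Acoef (2 * a + 2) k (u0 + 1)
        = ((2 * a + 2).choose (u0 + 1) : ℝ) - (2 * a + 2).choose (u0 + 1 + k + 1) := by
      unfold Acoef
      exact if_pos ((hcn _).2 (by omega))
    rw [L, g1, g2, m1, m2, if_neg (by omega : ¬ u0 + 1 = u0), if_pos rfl]
    ring
  · have L : Acoef (2 * a + 4) k (w + 2)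
        = ((2 * a + 4).choose (w + 2) : ℝ) - (2 * a + 4).choose (w + 2 + k + 1) := by
      unfold Acoef
      exact if_pos ((hcN _).2 (by omega))
    have g1 : (if 2 ≤ w + 2 then Acoef (2 * a + 2) k (w + 2 - 2) else 0)
        = Acoef (2 * a + 2) k w := by
      rw [if_pos (by omega), show w + 2 - 2 = w from by omega]
    have g2 : (if 1 ≤ w + 2 then Acoef (2 * a + 2) k (w + 2 - 1) else 0)
        = Acoef (2 * a + 2) k (w + 1) := by
      rw [if_pos (by omega), show w + 2 - 1 = w + 1 from by omega]
    have m0 : Acoef (2 * a + 2) k w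
        = ((2 * a + 2).choose w : ℝ) - (2 * a + 2).choose (w + k + 1) := by
      unfold Acoef
      exact if_pos ((hcn _).2 hw)
    have m1 : Acoef (2 * a + 2) k (w + 1)
        = ((2 * a + 2).choose (w + 1) : ℝ) - (2 * a + 2).choose (w + 1 + k + 1) := by
      unfold Acoef
      exact if_pos ((hcn _).2 (by omega))
    have m2 : Acoef (2 * a + 2) k (w + 2)
        = ((2 * a + 2).choose (w + 2) : ℝ) - (2 * a + 2).choose (w + 2 + k + 1) := by
      unfold Acoef
      exact if_pos ((hcn _).2 (by omega))
    rw [L, g1, g2, m0, m1, m2, if_neg (by omega : ¬ w + 2 = u0),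
      if_neg (by omega : ¬ w + 2 = u0 + 1),
      show w + 2 + k + 1 = (w + k + 1) + 2 from by omega,
      show w + 1 + k + 1 = (w + k + 1) + 1 from by omega,
      pascalR a w, pascalR a (w + k + 1)]
    ring

lemma master (a k u0 : ℕ) (β0 β1 : ℝ) (hu0 : u0 ≤ 2 * a + 3) (p : ℝ)
    (hpw : ∀ v, Acoef (2 * a + 4) k v
      = (if 2 ≤ v then Acoef (2 * a + 2) k (v - 2) else 0)
        + 2 * (if 1 ≤ v then Acoef (2 * a + 2) k (v - 1) else 0)
        + Acoef (2 * a + 2) k v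
        + (if v = u0 then β0 else 0) + (if v = u0 + 1 then β1 else 0)) :
    ∑ v ∈ Finset.range (2 * a + 4 + 1), Acoef (2 * a + 4) k v * p ^ v * (1 - p) ^ (2 * a + 4 - v)
      = (∑ u ∈ Finset.range (2 * a + 2 + 1),
          Acoef (2 * a + 2) k u * p ^ u * (1 - p) ^ (2 * a + 2 - u))
        + β0 * p ^ u0 * (1 - p) ^ (2 * a + 4 - u0)
        + β1 * p ^ (u0 + 1) * (1 - p) ^ (2 * a + 3 - u0) := by
  have h0 : ∑ v ∈ Finset.range (2 * a + 4 + 1),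
        Acoef (2 * a + 4) k v * p ^ v * (1 - p) ^ (2 * a + 4 - v)
      = ∑ v ∈ Finset.range (2 * a + 4 + 1),
        ((if 2 ≤ v then Acoef (2 * a + 2) k (v - 2) else 0) * p ^ v * (1 - p) ^ (2 * a + 4 - v)
          + 2 * ((if 1 ≤ v then Acoef (2 * a + 2) k (v - 1) else 0) * p ^ v
              * (1 - p) ^ (2 * a + 4 - v))
          + Acoef (2 * a + 2) k v * p ^ v * (1 - p) ^ (2 * a + 4 - v)
          + (if v = u0 then β0 * p ^ v * (1 - p) ^ (2 * a + 4 - v) else 0)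
          + (if v = u0 + 1 then β1 * p ^ v * (1 - p) ^ (2 * a + 4 - v) else 0)) := by
    refine Finset.sum_congr rfl fun v _ => ?_
    rw [hpw v]
    split_ifs <;> ring
  rw [h0]
  rw [Finset.sum_add_distrib, Finset.sum_add_distrib, Finset.sum_add_distrib,
    Finset.sum_add_distrib]
  have h1 : ∑ v ∈ Finset.range (2 * a + 4 + 1),
        (if 2 ≤ v then Acoef (2 * a + 2) k (v - 2) else 0) * p ^ v * (1 - p) ^ (2 * a + 4 - v)
      = p ^ 2 * ∑ u ∈ Finset.range (2 * a + 2 + 1),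
          Acoef (2 * a + 2) k u * p ^ u * (1 - p) ^ (2 * a + 2 - u) := by
    rw [Finset.sum_range_succ', show 2 * a + 4 = 2 * a + 3 + 1 from by omega,
      Finset.sum_range_succ', Finset.mul_sum]
    have e1 : ∑ w ∈ Finset.range (2 * a + 3),
        (if 2 ≤ w + 1 + 1 then Acoef (2 * a + 2) k (w + 1 + 1 - 2) else 0) * p ^ (w + 1 + 1)
          * (1 - p) ^ (2 * a + 3 + 1 - (w + 1 + 1))
        = ∑ w ∈ Finset.range (2 * a + 2 + 1),
          p ^ 2 * (Acoef (2 * a + 2) k w * p ^ w * (1 - p) ^ (2 * a + 2 - w)) := by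
      refine Finset.sum_congr (by rw [show 2 * a + 3 = 2 * a + 2 + 1 from by omega]) fun w _ => ?_
      rw [if_pos (by omega), show w + 1 + 1 - 2 = w from by omega,
        show 2 * a + 3 + 1 - (w + 1 + 1) = 2 * a + 2 - w from by omega]
      ring
    rw [e1]
    norm_num
  have h2 : ∑ v ∈ Finset.range (2 * a + 4 + 1),
        2 * ((if 1 ≤ v then Acoef (2 * a + 2) k (v - 1) else 0) * p ^ v
          * (1 - p) ^ (2 * a + 4 - v))
      = 2 * p * (1 - p) * ∑ u ∈ Finset.range (2 * a + 2 + 1),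
          Acoef (2 * a + 2) k u * p ^ u * (1 - p) ^ (2 * a + 2 - u) := by
    rw [Finset.sum_range_succ', show 2 * a + 4 = 2 * a + 3 + 1 from by omega,
      Finset.sum_range_succ, Finset.mul_sum]
    have z : Acoef (2 * a + 2) k (2 * a + 3 + 1 - 1) = 0 := Acoef_zero (by omega)
    have e1 : ∑ w ∈ Finset.range (2 * a + 3),
        2 * ((if 1 ≤ w + 1 then Acoef (2 * a + 2) k (w + 1 - 1) else 0) * p ^ (w + 1)
          * (1 - p) ^ (2 * a + 3 + 1 - (w + 1)))
        = ∑ w ∈ Finset.range (2 * a + 2 + 1),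
          2 * p * (1 - p) * (Acoef (2 * a + 2) k w * p ^ w * (1 - p) ^ (2 * a + 2 - w)) := by
      refine Finset.sum_congr (by rw [show 2 * a + 3 = 2 * a + 2 + 1 from by omega]) fun w hw => ?_
      have hwb : w < 2 * a + 3 := Finset.mem_range.1 (by rwa [show 2 * a + 2 + 1 = 2 * a + 3 from by omega] at hw)
      rw [if_pos (by omega), show w + 1 - 1 = w from by omega,
        show 2 * a + 3 + 1 - (w + 1) = (2 * a + 2 - w) + 1 from by omega]
      ring
    rw [e1, z]
    norm_num
  have h3 : ∑ v ∈ Finset.range (2 * a + 4 + 1),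
        Acoef (2 * a + 2) k v * p ^ v * (1 - p) ^ (2 * a + 4 - v)
      = (1 - p) ^ 2 * ∑ u ∈ Finset.range (2 * a + 2 + 1),
          Acoef (2 * a + 2) k u * p ^ u * (1 - p) ^ (2 * a + 2 - u) := by
    rw [Finset.sum_range_succ, show 2 * a + 4 = 2 * a + 3 + 1 from by omega,
      Finset.sum_range_succ, Finset.mul_sum]
    have z1 : Acoef (2 * a + 2) k (2 * a + 3 + 1) = 0 := Acoef_zero (by omega)
    have z2 : Acoef (2 * a + 2) k (2 * a + 3) = 0 := Acoef_zero (by omega)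
    have e1 : ∑ v ∈ Finset.range (2 * a + 3),
        Acoef (2 * a + 2) k v * p ^ v * (1 - p) ^ (2 * a + 3 + 1 - v)
        = ∑ v ∈ Finset.range (2 * a + 2 + 1),
          (1 - p) ^ 2 * (Acoef (2 * a + 2) k v * p ^ v * (1 - p) ^ (2 * a + 2 - v)) := by
      refine Finset.sum_congr (by rw [show 2 * a + 3 = 2 * a + 2 + 1 from by omega]) fun v hv => ?_
      have hvb : v < 2 * a + 3 := Finset.mem_range.1 (by rwa [show 2 * a + 2 + 1 = 2 * a + 3 from by omega] at hv)
      rw [show 2 * a + 3 + 1 - v = (2 * a + 2 - v) + 2 from by omega]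
      ring
    rw [e1, z1, z2]
    norm_num
  have h4 : ∑ v ∈ Finset.range (2 * a + 4 + 1),
        (if v = u0 then β0 * p ^ v * (1 - p) ^ (2 * a + 4 - v) else 0)
      = β0 * p ^ u0 * (1 - p) ^ (2 * a + 4 - u0) := by
    rw [Finset.sum_ite_eq' (Finset.range (2 * a + 4 + 1)) u0
      (fun v => β0 * p ^ v * (1 - p) ^ (2 * a + 4 - v))]
    rw [if_pos (Finset.mem_range.2 (by omega))]
  have h5 : ∑ v ∈ Finset.range (2 * a + 4 + 1),
        (if v = u0 + 1 then β1 * p ^ v * (1 - p) ^ (2 * a + 4 - v) else 0)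
      = β1 * p ^ (u0 + 1) * (1 - p) ^ (2 * a + 3 - u0) := by
    rw [Finset.sum_ite_eq' (Finset.range (2 * a + 4 + 1)) (u0 + 1)
      (fun v => β1 * p ^ v * (1 - p) ^ (2 * a + 4 - v))]
    rw [if_pos (Finset.mem_range.2 (by omega)),
      show 2 * a + 4 - (u0 + 1) = 2 * a + 3 - u0 from by omega]
  rw [h1, h2, h3, h4, h5]
  ring

end WtProof

/-- Formula for `W̃_{2m+5}(p) − W̃_{2m+3}(p) + t_{m+3} p^{m+3} q^{m+1}`,
where `t_{m+3} = C(2m+4, m+2)/(m+3)`. -/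
theorem Wt_odd_minus_odd (p : ℝ) (hp : p ∈ Set.Ioo (0 : ℝ) 1) (m : ℕ) (hm : 1 ≤ m) :
    Wt (2 * m + 5) p - Wt (2 * m + 3) p +
        (((2 * m + 4).choose (m + 2) : ℝ) / (m + 3)) * p ^ (m + 3) * (1 - p) ^ (m + 1) =
      p ^ m * (1 - p) ^ m *
        (dCoef m 0 * p ^ 5 - 2 * dCoef m 1 * p ^ 4 * (1 - p) +
          (dCoef m 0 + 3 * dCoef m 1 + 2 * dCoef m 2) * p ^ 3 * (1 - p) ^ 2 -
          (dCoef m 0 + dCoef m 1 + 3 * dCoef m 2 + dCoef m 3) * p ^ 2 * (1 - p) ^ 3 -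
          (3 * dCoef m 0 + 4 * dCoef m 1 + 2 * dCoef m 2) * p * (1 - p) ^ 4 -
          (dCoef m 0 + dCoef m 1) * (1 - p) ^ 5 +
          (((2 * m + 4).choose (m + 2) : ℝ) / (m + 3)) * p ^ 3 * (1 - p)) := by
  obtain ⟨a, rfl⟩ : ∃ a, m = a + 1 := ⟨m - 1, by omega⟩
  have e1 : 2 * (a + 1) + 5 = 2 * a + 4 + 3 := by omega
  have e2 : 2 * (a + 1) + 3 = 2 * a + 2 + 3 := by omega
  rw [e1, e2, WtProof.Wt_eq p (2 * a + 4), WtProof.Wt_eq p (2 * a + 2)]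
  have M0 := WtProof.master a 0 (a + 2) _ _ (by omega) p
    (WtProof.pwgen a 0 (a + 2) (fun u => by omega) (fun v => by omega))
  have M1 := WtProof.master a 1 (a + 1) _ _ (by omega) p
    (WtProof.pwgen a 1 (a + 1) (fun u => by omega) (fun v => by omega))
  have M2 := WtProof.master a 2 (a + 1) _ _ (by omega) p
    (WtProof.pwgen a 2 (a + 1) (fun u => by omega) (fun v => by omega))
  have M3 := WtProof.master a 3 a _ _ (by omega) p
    (WtProof.pwgen a 3 a (fun u => by omega) (fun v => by omega))
  have M4 := WtProof.master a 4 a _ _ (by omega) p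
    (WtProof.pwgen a 4 a (fun u => by omega) (fun v => by omega))
  have hexp : ∀ g : ℕ → ℝ, ∑ k ∈ Finset.range 5, g k = g 0 + g 1 + g 2 + g 3 + g 4 := by
    intro g
    show ∑ k ∈ Finset.range (4 + 1), g k = _
    rw [Finset.sum_range_succ, Finset.sum_range_succ, Finset.sum_range_succ,
      Finset.sum_range_succ, Finset.sum_range_one]
  rw [hexp, hexp]
  simp only [deltaPi3, dCoef]
  rw [M0, M1, M2, M3, M4]
  have hs1n : (2 * a + 2).choose a = (2 * a + 2).choose (a + 2) := by
    rw [← Nat.choose_symm (by omega : a + 2 ≤ 2 * a + 2)]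
    congr 1
    omega
  have hs1 : ((2 * a + 2).choose a : ℝ) = (2 * a + 2).choose (a + 2) := by
    exact_mod_cast hs1n
  have hC1 : ((2 * a + 4).choose (a + 1) : ℝ)
      = (2 * a + 2).choose (a + 1) + 2 * (2 * a + 2).choose (a + 2)
        + (2 * a + 2).choose (a + 3) := by
    have hn : (2 * a + 4).choose (a + 1) = (2 * a + 4).choose (a + 1 + 2) := by
      rw [← Nat.choose_symm (by omega : a + 1 + 2 ≤ 2 * a + 4)]
      congr 1
      omega
    rw [hn]
    have h := WtProof.pascalR a (a + 1)
    simp only [add_assoc] at h ⊢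
    norm_num at h ⊢
    exact h
  have hC2 : ((2 * a + 4).choose (a + 2) : ℝ)
      = (2 * a + 2).choose (a + 2) + 2 * (2 * a + 2).choose (a + 1)
        + (2 * a + 2).choose (a + 2) := by
    rw [WtProof.pascalR a a, hs1]
  have hC3 : ((2 * a + 4).choose (a + 3) : ℝ)
      = (2 * a + 2).choose (a + 1) + 2 * (2 * a + 2).choose (a + 2)
        + (2 * a + 2).choose (a + 3) := by
    have h := WtProof.pascalR a (a + 1)
    simp only [add_assoc] at h ⊢
    norm_num at h ⊢
    exact h
  have hC4 : ((2 * a + 4).choose (a + 4) : ℝ)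
      = (2 * a + 2).choose (a + 2) + 2 * (2 * a + 2).choose (a + 3)
        + (2 * a + 2).choose (a + 4) := by
    have h := WtProof.pascalR a (a + 2)
    simp only [add_assoc] at h ⊢
    norm_num at h ⊢
    exact h
  have hC5 : ((2 * a + 4).choose (a + 5) : ℝ)
      = (2 * a + 2).choose (a + 3) + 2 * (2 * a + 2).choose (a + 4)
        + (2 * a + 2).choose (a + 5) := by
    have h := WtProof.pascalR a (a + 3)
    simp only [add_assoc] at h ⊢
    norm_num at h ⊢
    exact h
  have hC6 : ((2 * a + 4).choose (a + 6) : ℝ)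
      = (2 * a + 2).choose (a + 4) + 2 * (2 * a + 2).choose (a + 5)
        + (2 * a + 2).choose (a + 6) := by
    have h := WtProof.pascalR a (a + 4)
    simp only [add_assoc] at h ⊢
    norm_num at h ⊢
    exact h
  simp only [show (2:ℕ) * (a + 1) = 2 * a + 2 from by ring, add_assoc]
  norm_num
  simp only [show 2 * a + 4 - (a + 2) = a + 2 from by omega,
    show 2 * a + 3 - (a + 2) = a + 1 from by omega,
    show 2 * a + 4 - (a + 1) = a + 3 from by omega,
    show 2 * a + 3 - (a + 1) = a + 2 from by omega,
    show 2 * a + 4 - a = a + 4 from by omega,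
    show 2 * a + 3 - a = a + 3 from by omega]
  rw [hs1, hC1, hC2, hC3, hC4, hC5, hC6]
  ring
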